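/- For every real number s with 0 < s < π²/2, the series Σ_{i=0}^∞ β_i s^i converges (HasSum), and its sum equals √(2s)/sin(√(2s)). -/

import Mathlib

/-!
Statement 5: for `0 < s < π²/2` the series `Σ_{i≥0} β_i s^i` converges with sum
`√(2s)/sin(√(2s))`, where `β_i = (−1)^{i−1} 2^i (2^{2i} − 2) B_{2i}/(2i)!`.
-/

noncomputable section

/-- `β_i = (−1)^{i−1} · 2^i · (2^{2i} − 2) · B_{2i}/(2i)!` as a real number.
(We write `(−1)^{i+1} = (−1)^{i−1}`, which is also correct for `i = 0`;
in particular `β_0 = 1` and `β_1 = 1/3`.) -/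
def betaCoeff (i : ℕ) : ℝ :=
  (-1 : ℝ) ^ (i + 1) * 2 ^ i * (2 ^ (2 * i) - 2) *
    ((bernoulli (2 * i) : ℚ) : ℝ) / Nat.factorial (2 * i)

open Real Complex MeasureTheory Set intervalIntegral

lemma my_integral_exp (c : ℂ) (hc : c ≠ 0) :
    ∫ x in (0:ℝ)..1, Complex.exp (c * x) = (Complex.exp c - 1) / c := by
  rw [integral_exp_mul_complex hc]
  simp

lemma cos_fourierCoeffOn {t : ℝ} (ht : 0 < t) (ht' : t < 1) (n : ℤ) :
    fourierCoeffOn zero_lt_one (fun x : ℝ => Complex.cos (2*π*t*(x - 1/2))) n =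
      (t : ℂ) * Complex.sin (π*t) / (π*((t:ℂ)^2 - (n:ℂ)^2)) := by
  have hπ : (π : ℂ) ≠ 0 := Complex.ofReal_ne_zero.mpr Real.pi_ne_zero
  have htn : (t : ℂ) - n ≠ 0 := by
    intro h
    have h1 : (t : ℝ) = (n : ℝ) := by exact_mod_cast sub_eq_zero.mp h
    rcases le_or_gt n 0 with h' | h'
    · have h2 : (n : ℝ) ≤ 0 := by exact_mod_cast h'
      linarith
    · have h2 : (1 : ℝ) ≤ (n : ℝ) := by exact_mod_cast h'
      linarith
  have htn' : (t : ℂ) + n ≠ 0 := by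
    intro h
    have h1 : (t : ℝ) = -(n : ℝ) := by exact_mod_cast eq_neg_of_add_eq_zero_left h
    rcases le_or_gt 0 n with h' | h'
    · have h2 : (0 : ℝ) ≤ (n : ℝ) := by exact_mod_cast h'
      linarith
    · have h3 : n ≤ -1 := by omega
      have h2 : (n : ℝ) ≤ -1 := by exact_mod_cast h3
      linarith
  have hden : ((t:ℂ)^2 - (n:ℂ)^2) ≠ 0 := by
    intro h
    have : ((t:ℂ) - n) * ((t:ℂ) + n) = 0 := by linear_combination h
    rcases mul_eq_zero.mp this with h' | h'
    · exact htn h'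
    · exact htn' h'
  set a1 : ℂ := 2*(π:ℂ)*Complex.I*((t:ℂ) - n) with ha1def
  set a2 : ℂ := -(2*(π:ℂ)*Complex.I*((t:ℂ) + n)) with ha2def
  have hI : (Complex.I : ℂ) ≠ 0 := Complex.I_ne_zero
  have ha1 : a1 ≠ 0 := by
    rw [ha1def]
    exact mul_ne_zero (mul_ne_zero (mul_ne_zero two_ne_zero hπ) hI) htn
  have ha2 : a2 ≠ 0 := by
    rw [ha2def, neg_ne_zero]
    exact mul_ne_zero (mul_ne_zero (mul_ne_zero two_ne_zero hπ) hI) htn'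
  set E : ℂ := Complex.exp ((π:ℂ)*(t:ℂ)*Complex.I) with hEdef
  have hE : E ≠ 0 := Complex.exp_ne_zero _
  have h2I : (2*Complex.I : ℂ) ≠ 0 := mul_ne_zero two_ne_zero hI
  have hE1 : E = Complex.cos ((π:ℂ)*(t:ℂ)) + Complex.sin ((π:ℂ)*(t:ℂ)) * Complex.I := by
    rw [hEdef, ← Complex.exp_mul_I]
  have hE2 : E⁻¹ = Complex.cos ((π:ℂ)*(t:ℂ)) - Complex.sin ((π:ℂ)*(t:ℂ)) * Complex.I := by
    rw [hEdef, ← Complex.exp_neg,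
      show -((π:ℂ)*(t:ℂ)*Complex.I) = (-((π:ℂ)*(t:ℂ)))*Complex.I by ring,
      Complex.exp_mul_I, Complex.cos_neg, Complex.sin_neg]
    ring
  have key : ∀ x : ℝ, (fourier (-n) (x : AddCircle ((1:ℝ)-0)) : ℂ) • Complex.cos (2*(π:ℂ)*(t:ℂ)*((x:ℂ) - 1/2))
      = E⁻¹/2 * Complex.exp (a1*x) + E/2 * Complex.exp (a2*x) := by
    intro x
    have hcos : Complex.cos (2*(π:ℂ)*(t:ℂ)*((x:ℂ) - 1/2))
        = (Complex.exp ((2*(π:ℂ)*(t:ℂ)*((x:ℂ) - 1/2))*Complex.I)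
          + Complex.exp (-(2*(π:ℂ)*(t:ℂ)*((x:ℂ) - 1/2))*Complex.I))/2 := by
      rw [eq_div_iff (two_ne_zero' ℂ)]
      linear_combination Complex.two_cos (2*(π:ℂ)*(t:ℂ)*((x:ℂ) - 1/2))
    rw [fourier_coe_apply, smul_eq_mul, hcos, hEdef, ← Complex.exp_neg,
      div_mul_eq_mul_div, div_mul_eq_mul_div, ← Complex.exp_add, ← Complex.exp_add,
      ← add_div, ← mul_div_assoc, mul_add, ← Complex.exp_add, ← Complex.exp_add]
    congr 3
    · push_cast
      ring
    · push_cast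
      ring
  rw [fourierCoeffOn_eq_integral]
  rw [intervalIntegral.integral_congr (g := fun x : ℝ =>
      E⁻¹/2 * Complex.exp (a1*x) + E/2 * Complex.exp (a2*x)) (fun x _ => key x)]
  have hint1 : IntervalIntegrable (fun x : ℝ => Complex.exp (a1*x)) volume 0 1 :=
    (Complex.continuous_exp.comp (continuous_const.mul Complex.continuous_ofReal)).intervalIntegrable _ _
  have hint2 : IntervalIntegrable (fun x : ℝ => Complex.exp (a2*x)) volume 0 1 :=
    (Complex.continuous_exp.comp (continuous_const.mul Complex.continuous_ofReal)).intervalIntegrable _ _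
  rw [intervalIntegral.integral_add (hint1.const_mul _) (hint2.const_mul _),
    intervalIntegral.integral_const_mul, intervalIntegral.integral_const_mul,
    my_integral_exp _ ha1, my_integral_exp _ ha2]
  have hEsq : E^2 = Complex.exp ((π:ℂ)*(t:ℂ)*Complex.I + (π:ℂ)*(t:ℂ)*Complex.I) := by
    rw [Complex.exp_add, hEdef, sq]
  have hexpa1 : Complex.exp a1 = E^2 := by
    rw [hEsq, ha1def,
      show 2*(π:ℂ)*Complex.I*((t:ℂ)-n) = (-n:ℤ)*(2*(π:ℂ)*Complex.I) + ((π:ℂ)*(t:ℂ)*Complex.I + (π:ℂ)*(t:ℂ)*Complex.I) by push_cast; ring,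
      Complex.exp_add, Complex.exp_int_mul_two_pi_mul_I, one_mul]
  have hexpa2 : Complex.exp a2 = (E^2)⁻¹ := by
    rw [hEsq, ← Complex.exp_neg, ha2def,
      show -(2*(π:ℂ)*Complex.I*((t:ℂ)+n)) = (-n:ℤ)*(2*(π:ℂ)*Complex.I) + -((π:ℂ)*(t:ℂ)*Complex.I + (π:ℂ)*(t:ℂ)*Complex.I) by push_cast; ring,
      Complex.exp_add, Complex.exp_int_mul_two_pi_mul_I, one_mul]
  rw [hexpa1, hexpa2]
  have hEinv : E * E⁻¹ = 1 := mul_inv_cancel₀ hE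
  have hsinI : Complex.sin ((π:ℂ)*(t:ℂ)) * Complex.I = (E - E⁻¹)/2 := by
    rw [hE2, hE1]
    ring
  have e1 : E⁻¹/2 * ((E^2 - 1)/a1) = Complex.sin ((π:ℂ)*(t:ℂ)) * Complex.I / a1 := by
    rw [hsinI, ← mul_div_assoc]
    congr 1
    linear_combination (E/2) * hEinv
  have e2 : E/2 * (((E^2)⁻¹ - 1)/a2) = -(Complex.sin ((π:ℂ)*(t:ℂ)) * Complex.I) / a2 := by
    have hE2inv : (E^2)⁻¹ = E⁻¹ * E⁻¹ := by rw [sq, mul_inv]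
    rw [hsinI, hE2inv, ← mul_div_assoc]
    congr 1
    linear_combination (E⁻¹/2) * hEinv
  rw [e1, e2, show ((1:ℝ)-0) = 1 by norm_num, show ((1:ℝ)/1) = 1 by norm_num, one_smul]
  rw [div_add_div _ _ ha1 ha2, div_eq_div_iff (mul_ne_zero ha1 ha2) (mul_ne_zero hπ hden),
    ha1def, ha2def]
  ring

lemma cot_partial_fraction {t : ℝ} (ht : 0 < t) (ht' : t < 1) :
    HasSum (fun n : ℤ => t * Real.sin (π*t) / (π*(t^2 - (n:ℝ)^2))) (Real.cos (π*t)) := by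
  rw [← Complex.hasSum_ofReal]
  -- the periodized cosine function
  set f : ℝ → ℂ := fun x => Complex.cos (2*π*t*(x - 1/2)) with hfdef
  have hend : f 0 = f 1 := by
    simp only [hfdef]
    norm_num
  have hcont : Continuous (AddCircle.liftIco 1 0 f) :=
    AddCircle.liftIco_zero_continuous hend
      (Complex.continuous_cos.comp (by continuity)).continuousOn
  set F : C(AddCircle (1:ℝ), ℂ) := ⟨AddCircle.liftIco 1 0 f, hcont⟩ with hFdef
  have hcoeff : ∀ n : ℤ, fourierCoeff (F : AddCircle (1:ℝ) → ℂ) n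
      = (t : ℂ) * Complex.sin (π*t) / (π*((t:ℂ)^2 - (n:ℂ)^2)) := by
    intro n
    rw [hFdef, ContinuousMap.coe_mk, fourierCoeff_liftIco_eq]
    simpa only [zero_add] using cos_fourierCoeffOn ht ht' n
  have hsinpos : 0 < Real.sin (π*t) := by
    apply Real.sin_pos_of_pos_of_lt_pi (by positivity)
    nlinarith [Real.pi_pos]
  have hsummable : Summable (fun n : ℤ => fourierCoeff (F : AddCircle (1:ℝ) → ℂ) n) := by
    have hr : Summable (fun n : ℕ => t * Real.sin (π*t) / (π*(t^2 - ((n:ℝ))^2))) := by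
      rw [← summable_nat_add_iff 2]
      have hmaj : Summable (fun n : ℕ => (t*Real.sin (π*t)/π) * (1/((n:ℝ)+1)^2)) := by
        apply Summable.mul_left
        have h0 : Summable (fun n : ℕ => 1/((n:ℝ))^2) :=
          Real.summable_one_div_nat_pow.mpr one_lt_two
        have h1 := (summable_nat_add_iff 1).mpr h0
        exact h1.congr fun n => by push_cast; ring
      apply Summable.of_norm_bounded hmaj
      intro n
      have hnum : 0 < t * Real.sin (π*t) := mul_pos ht hsinpos
      have hd1 : (0:ℝ) < ((n:ℝ)+1)^2 := by positivity
      have hn0 : (0:ℝ) ≤ (n:ℝ) := Nat.cast_nonneg n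
      have ht2 : t^2 < 1 := by nlinarith
      have hd2 : ((n:ℝ)+1)^2 ≤ (((n:ℝ)+2))^2 - t^2 := by nlinarith
      have habs : ‖t * Real.sin (π*t) / (π*(t^2 - ((n:ℝ)+2)^2))‖
          = t*Real.sin (π*t) / (π*((((n:ℝ)+2))^2 - t^2)) := by
        rw [Real.norm_eq_abs, abs_div, abs_of_pos hnum, abs_of_neg
          (show π*(t^2 - ((n:ℝ)+2)^2) < 0 by
            apply mul_neg_of_pos_of_neg Real.pi_pos
            nlinarith)]
        congr 1
        ring
      have hcast : ((n + 2 : ℕ) : ℝ) = ((n:ℝ)+2) := by push_cast; ring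
      rw [hcast, habs, show (t*Real.sin (π*t)/π) * (1/((n:ℝ)+1)^2)
        = t*Real.sin (π*t) / (π*((n:ℝ)+1)^2) by field_simp]
      gcongr
    have hrZ : Summable (fun n : ℤ => t * Real.sin (π*t) / (π*(t^2 - ((n:ℝ))^2))) := by
      apply Summable.of_nat_of_neg
      · exact hr.congr fun n => by push_cast; ring
      · exact hr.congr fun n => by push_cast; ring
    have := (Complex.summable_ofReal (f := fun n : ℤ => t * Real.sin (π*t) / (π*(t^2 - ((n:ℝ))^2)))).mpr hrZ
    apply this.congr
    intro n
    rw [hcoeff n]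
    push_cast
    norm_num
  have hpt := has_pointwise_sum_fourier_series_of_summable hsummable (0 : AddCircle (1:ℝ))
  have hF0 : F (0 : AddCircle (1:ℝ)) = Complex.cos (π*t) := by
    rw [hFdef, ContinuousMap.coe_mk,
      show ((0 : AddCircle (1:ℝ))) = ((0:ℝ) : AddCircle (1:ℝ)) by norm_num,
      AddCircle.liftIco_zero_coe_apply (by constructor <;> norm_num : (0:ℝ) ∈ Ico (0:ℝ) 1)]
    simp only [hfdef]
    rw [show (2*(π:ℂ)*(t:ℂ)*((0:ℝ) - 1/2)) = -((π:ℂ)*(t:ℂ)) by push_cast; ring, Complex.cos_neg]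
  rw [hF0] at hpt
  have hterm : ∀ n : ℤ, fourierCoeff (F : AddCircle (1:ℝ) → ℂ) n • fourier n (0 : AddCircle (1:ℝ))
      = ((t * Real.sin (π*t) / (π*(t^2 - (n:ℝ)^2)) : ℝ) : ℂ) := by
    intro n
    rw [fourier_eval_zero, smul_eq_mul, mul_one, hcoeff n]
    push_cast
    norm_num
  have : Complex.cos ((π:ℂ)*(t:ℂ)) = ((Real.cos (π*t) : ℝ) : ℂ) := by push_cast; norm_num
  rw [this] at hpt
  exact hpt.congr_fun fun n => (hterm n).symm

lemma cot_pf_nat {u : ℝ} (hu : 0 < u) (hu' : u < 1) :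
    HasSum (fun n : ℕ => 2*u^2/(((n:ℝ)+1)^2 - u^2))
      (1 - π*u*Real.cos (π*u)/Real.sin (π*u)) := by
  have hπ := Real.pi_pos
  have hsinpos : 0 < Real.sin (π*u) := by
    apply Real.sin_pos_of_pos_of_lt_pi (by positivity)
    nlinarith
  have h := (cot_partial_fraction hu hu').nat_add_neg
  have h2 : HasSum (fun n : ℕ => 2*(u * Real.sin (π*u) / (π*(u^2 - (n:ℝ)^2))))
      (Real.cos (π*u) + Real.sin (π*u)/(π*u)) := by
    have e1 : (fun n : ℕ => u * Real.sin (π*u) / (π*(u^2 - ((n:ℤ):ℝ)^2))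
          + u * Real.sin (π*u) / (π*(u^2 - (((-n:ℤ)):ℝ)^2)))
        = fun n : ℕ => 2*(u * Real.sin (π*u) / (π*(u^2 - (n:ℝ)^2))) := by
      funext n; push_cast; ring
    have e2 : Real.cos (π*u) + u * Real.sin (π*u) / (π*(u^2 - ((0:ℤ):ℝ)^2))
        = Real.cos (π*u) + Real.sin (π*u)/(π*u) := by
      have : u^2 - ((0:ℤ):ℝ)^2 = u*u := by push_cast; ring
      rw [this]
      congr 1
      rw [show π*(u*u) = u*(π*u) by ring, mul_div_mul_left _ _ (ne_of_gt hu)]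
    rw [e1] at h
    rw [e2] at h
    exact h
  have h3 := (hasSum_nat_add_iff' (f := fun n : ℕ => 2*(u * Real.sin (π*u) / (π*(u^2 - (n:ℝ)^2)))) 1).mpr h2
  have h4 := h3.mul_left (-(π*u)/Real.sin (π*u))
  have e3 : (fun n : ℕ => (-(π*u)/Real.sin (π*u)) * ((fun n : ℕ =>
        2*(u * Real.sin (π*u) / (π*(u^2 - (n:ℝ)^2)))) (n + 1)))
      = fun n : ℕ => 2*u^2/(((n:ℝ)+1)^2 - u^2) := by
    funext n
    have hn0 : (0:ℝ) ≤ (n:ℝ) := Nat.cast_nonneg n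
    have hd : ((n:ℝ)+1)^2 - u^2 ≠ 0 := by nlinarith
    have hd' : u^2 - (((n:ℕ)+1:ℕ):ℝ)^2 ≠ 0 := by push_cast; intro hc; apply hd; linarith
    show (-(π*u)/Real.sin (π*u)) * (2*(u * Real.sin (π*u) / (π*(u^2 - (((n:ℕ)+1:ℕ):ℝ)^2))))
      = 2*u^2/(((n:ℝ)+1)^2 - u^2)
    push_cast
    push_cast at hd'
    field_simp
    ring
  rw [e3] at h4
  have e4 : (-(π*u)/Real.sin (π*u)) * ((Real.cos (π*u) + Real.sin (π*u)/(π*u))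
      - ∑ i ∈ Finset.range 1, 2*(u * Real.sin (π*u) / (π*(u^2 - (i:ℝ)^2))))
      = 1 - π*u*Real.cos (π*u)/Real.sin (π*u) := by
    rw [Finset.sum_range_one]
    push_cast
    field_simp
    ring
  rw [e4] at h4
  exact h4

lemma csc_pf {t : ℝ} (ht : 0 < t) (ht' : t < 1) :
    HasSum (fun n : ℕ => 2*t^2/(((n:ℝ)+1)^2 - t^2) - t^2/(((n:ℝ)+1)^2 - (t/2)^2))
      (π*t/Real.sin (π*t) - 1) := by
  have hπ := Real.pi_pos
  have h1 := cot_pf_nat ht ht'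
  have h2 := (cot_pf_nat (by positivity : 0 < t/2) (by linarith : t/2 < 1)).mul_left 2
  have h := h1.sub h2
  have e1 : ∀ n : ℕ, 2*t^2/(((n:ℝ)+1)^2 - t^2) - t^2/(((n:ℝ)+1)^2 - (t/2)^2)
      = 2*t^2/(((n:ℝ)+1)^2 - t^2) - 2*(2*(t/2)^2/(((n:ℝ)+1)^2 - (t/2)^2)) := by
    intro n; ring_nf
  have h' := h.congr_fun e1
  convert h' using 1
  case e'_3 => rfl
  set S := Real.sin (π*(t/2)) with hSdef
  set C := Real.cos (π*(t/2)) with hCdef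
  have hs2 : 0 < S := by
    rw [hSdef]
    apply Real.sin_pos_of_pos_of_lt_pi (by positivity); nlinarith
  have hdouble : Real.sin (π*t) = 2 * S * C := by
    rw [hSdef, hCdef, show π*t = 2*(π*(t/2)) by ring, Real.sin_two_mul]
  have hcos : Real.cos (π*t) = 2 * C^2 - 1 := by
    rw [hCdef, show π*t = 2*(π*(t/2)) by ring, Real.cos_two_mul]
  have hc2 : 0 < C := by
    rw [hCdef]
    apply Real.cos_pos_of_mem_Ioo
    constructor
    · nlinarith
    · nlinarith
  rw [hdouble, hcos]
  field_simp
  ring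

lemma beta_hasSum_zeta {s : ℝ} (hs : 0 < s) (i : ℕ) :
    HasSum (fun n : ℕ => (2*(2*s/π^2)^(i+1) - 4*((2*s/π^2)/4)^(i+1)) / ((n:ℝ)+1)^(2*(i+1)))
      (betaCoeff (i+1) * s^(i+1)) := by
  have hπ := Real.pi_pos
  have hz := hasSum_zeta_nat (k := i+1) (by omega)
  have hz0 : (1:ℝ)/((0:ℕ):ℝ)^(2*(i+1)) = 0 := by
    rw [Nat.cast_zero, zero_pow (by omega : 2*(i+1) ≠ 0), div_zero]
  have hz1 := (hasSum_nat_add_iff' (f := fun n : ℕ => 1/((n:ℝ))^(2*(i+1))) 1).mpr hz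
  rw [Finset.sum_range_one] at hz1
  rw [hz0, sub_zero] at hz1
  have hz2 := hz1.mul_left (2*(2*s/π^2)^(i+1) - 4*((2*s/π^2)/4)^(i+1))
  have hz3 := hz2.congr_fun (g := fun n : ℕ =>
      (2*(2*s/π^2)^(i+1) - 4*((2*s/π^2)/4)^(i+1)) / ((n:ℝ)+1)^(2*(i+1))) (by
    intro n
    push_cast
    rw [mul_one_div])
  convert hz3 using 1
  case e'_3 => rfl
  -- the value identity
  have key : (2*(2*s/π^2)^(i+1) - 4*((2*s/π^2)/4)^(i+1)) * (2^(2*(i+1)-1) * π^(2*(i+1)))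
      = 2^(i+1) * ((2:ℝ)^(2*(i+1)) - 2) * s^(i+1) := by
    have h1 : (2*s/π^2)^(i+1) = (2*s)^(i+1)/(π^2)^(i+1) := div_pow _ _ _
    have h2 : ((2*s/π^2)/4)^(i+1) = (2*s)^(i+1)/((π^2)^(i+1)*4^(i+1)) := by
      rw [div_div, div_pow, mul_pow ((π:ℝ)^2) 4 (i+1)]
    have h3 : (π:ℝ)^(2*(i+1)) = (π^2)^(i+1) := pow_mul π 2 (i+1)
    have h4 : 2*(i+1)-1 = 2*i+1 := by omega
    have h6 : (4:ℝ)^(i+1) = 2^(i+1)*2^(i+1) := by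
      rw [show (4:ℝ) = 2*2 by norm_num, mul_pow]
    have h5 : ((π:ℝ)^2)^(i+1) ≠ 0 := by positivity
    rw [h1, h2, h3, h4, h6]
    field_simp
    ring
  rw [show ((-1:ℝ) ^ (i+1+1) * 2 ^ (2*(i+1)-1) * π ^ (2*(i+1)) * ((bernoulli (2*(i+1)) : ℚ) : ℝ) /
        ((2*(i+1)).factorial : ℝ))
      = (2 ^ (2*(i+1)-1) * π ^ (2*(i+1))) * ((-1:ℝ) ^ (i+1+1) * ((bernoulli (2*(i+1)) : ℚ) : ℝ) /
        ((2*(i+1)).factorial : ℝ)) from by ring, ← mul_assoc, key, betaCoeff]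
  ring

lemma geom_fiber {q : ℝ} (hq0 : 0 < q) (hq1 : q < 1) (n : ℕ) :
    HasSum (fun i : ℕ => (2*q^(i+1) - 4*(q/4)^(i+1)) / ((n:ℝ)+1)^(2*(i+1)))
      (2*q/(((n:ℝ)+1)^2 - q) - q/(((n:ℝ)+1)^2 - q/4)) := by
  set N : ℝ := ((n:ℝ)+1)^2 with hNdef
  have hN1 : (1:ℝ) ≤ N := by
    rw [hNdef]; nlinarith [Nat.cast_nonneg (α := ℝ) n]
  have hr1lt : q/N < 1 := by
    rw [div_lt_one (by linarith)]; linarith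
  have hr1nn : 0 ≤ q/N := by positivity
  have hr2lt : (q/4)/N < 1 := by
    rw [div_lt_one (by linarith)]; nlinarith
  have hr2nn : 0 ≤ (q/4)/N := by positivity
  have hgeo1 := ((hasSum_geometric_of_lt_one hr1nn hr1lt).mul_left (2*(q/N))).congr_fun
    (g := fun i : ℕ => 2*(q/N)^(i+1))
    (by intro i; show 2*(q/N)^(i+1) = _; rw [pow_succ (q/N) i]; ring)
  have hgeo2 := ((hasSum_geometric_of_lt_one hr2nn hr2lt).mul_left (4*((q/4)/N))).congr_fun
    (g := fun i : ℕ => 4*((q/4)/N)^(i+1))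
    (by intro i; show 4*((q/4)/N)^(i+1) = _; rw [pow_succ ((q/4)/N) i]; ring)
  have hsum := hgeo1.sub hgeo2
  have hterm : ∀ i : ℕ, (2*q^(i+1) - 4*(q/4)^(i+1)) / ((n:ℝ)+1)^(2*(i+1))
      = 2*(q/N)^(i+1) - 4*((q/4)/N)^(i+1) := by
    intro i
    rw [div_pow q N (i+1), div_pow (q/4) N (i+1), pow_mul, ← hNdef, sub_div,
      mul_div_assoc, mul_div_assoc]
  have hvalue : 2*(q/N)*(1 - q/N)⁻¹ - 4*((q/4)/N)*(1 - (q/4)/N)⁻¹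
      = 2*q/(N - q) - q/(N - q/4) := by
    have hd1 : N - q ≠ 0 := by linarith
    have hd2 : N - q/4 ≠ 0 := by nlinarith
    have hNne : N ≠ 0 := by linarith
    rw [show (1 - q/N) = (N - q)/N by field_simp,
      show (1 - q/4/N) = (N - q/4)/N by field_simp]
    field_simp
  rw [← hvalue]
  exact hsum.congr_fun hterm

lemma nonneg_term {q : ℝ} (hq0 : 0 < q) (n i : ℕ) :
    0 ≤ (2*q^(i+1) - 4*(q/4)^(i+1)) / ((n:ℝ)+1)^(2*(i+1)) := by
  apply div_nonneg _ (by positivity)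
  have h1 : 4*(q/4)^(i+1) ≤ q^(i+1) := by
    rw [div_pow, pow_succ (4:ℝ) i,
      show (4:ℝ)*(q^(i+1)/(4^i*4)) = q^(i+1)/4^i by field_simp]
    exact div_le_self (pow_nonneg hq0.le _) (one_le_pow₀ (by norm_num))
  nlinarith [pow_nonneg hq0.le (i+1)]

lemma double_sum {q : ℝ} (hq0 : 0 < q) (hq1 : q < 1) (b : ℕ → ℝ) (c : ℝ)
    (hb : ∀ i : ℕ, HasSum (fun n : ℕ =>
      (2*q^(i+1) - 4*(q/4)^(i+1)) / ((n:ℝ)+1)^(2*(i+1))) (b i))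
    (hc : HasSum (fun n : ℕ => 2*q/(((n:ℝ)+1)^2 - q) - q/(((n:ℝ)+1)^2 - q/4)) c) :
    HasSum b c := by
  set F : ℕ × ℕ → ℝ := fun p => (2*q^(p.2+1) - 4*(q/4)^(p.2+1)) / ((p.1:ℝ)+1)^(2*(p.2+1))
    with hFdef
  have hfiber_n : ∀ n : ℕ, HasSum (fun i : ℕ => F (n, i))
      (2*q/(((n:ℝ)+1)^2 - q) - q/(((n:ℝ)+1)^2 - q/4)) := fun n => geom_fiber hq0 hq1 n
  have hfiber_i : ∀ i : ℕ, HasSum (fun n : ℕ => F (n, i)) (b i) := fun i => hb i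
  have hnonneg : ∀ p : ℕ × ℕ, 0 ≤ F p := fun p => nonneg_term hq0 p.1 p.2
  have hsummable : Summable F := by
    rw [summable_prod_of_nonneg hnonneg]
    exact ⟨fun n => ⟨_, hfiber_n n⟩,
      hc.summable.congr fun n => ((hfiber_n n).tsum_eq).symm⟩
  have hF := hsummable.hasSum
  have hA := hF.prod_fiberwise hfiber_n
  have hval : ∑' p, F p = c := hA.unique hc
  have hswap : HasSum (F ∘ (Equiv.prodComm ℕ ℕ)) (∑' p, F p) :=
    ((Equiv.prodComm ℕ ℕ).hasSum_iff).mpr hF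
  have hB := hswap.prod_fiberwise hfiber_i
  rwa [hval] at hB


/-- For `0 < s < π²/2`, the series `Σ β_i s^i` converges to `√(2s)/sin(√(2s))`. -/
theorem betaCoeff_hasSum (s : ℝ) (hs : 0 < s) (hs' : s < Real.pi ^ 2 / 2) :
    HasSum (fun i : ℕ => betaCoeff i * s ^ i)
      (Real.sqrt (2 * s) / Real.sin (Real.sqrt (2 * s))) := by
  have hπ := Real.pi_pos
  have hz0 : 0 < Real.sqrt (2*s) := Real.sqrt_pos.mpr (by linarith)
  have hz2 : Real.sqrt (2*s)^2 = 2*s := Real.sq_sqrt (by linarith)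
  have hzπ : Real.sqrt (2*s) < π := by nlinarith
  have ht0 : 0 < Real.sqrt (2*s)/π := by positivity
  have ht1 : Real.sqrt (2*s)/π < 1 := by rw [div_lt_one hπ]; exact hzπ
  have hq : (Real.sqrt (2*s)/π)^2 = 2*s/π^2 := by rw [div_pow, hz2]
  have hπt : π*(Real.sqrt (2*s)/π) = Real.sqrt (2*s) := by field_simp
  have hq0 : 0 < 2*s/π^2 := by positivity
  have hq1 : 2*s/π^2 < 1 := by rw [div_lt_one (by positivity)]; nlinarith
  -- the partial fraction sum, rewritten in terms of q
  have hg' := csc_pf ht0 ht1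
  rw [hπt] at hg'
  have hg : HasSum (fun n : ℕ => 2*(2*s/π^2)/(((n:ℝ)+1)^2 - 2*s/π^2)
        - (2*s/π^2)/(((n:ℝ)+1)^2 - (2*s/π^2)/4))
      (Real.sqrt (2*s)/Real.sin (Real.sqrt (2*s)) - 1) := by
    apply hg'.congr_fun
    intro n
    rw [← hq, show ((Real.sqrt (2*s)/π)^2)/4 = ((Real.sqrt (2*s)/π)/2)^2 by ring]
  have hB := double_sum hq0 hq1 (fun i => betaCoeff (i+1) * s^(i+1)) _
    (fun i => beta_hasSum_zeta hs i) hg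
  have h0 : betaCoeff 0 * s^0 = 1 := by
    norm_num [betaCoeff]
  have hfin := (hasSum_nat_add_iff (f := fun i : ℕ => betaCoeff i * s^i) 1).mp hB
  rw [Finset.sum_range_one, h0] at hfin
  rw [show (2:ℝ)*s = 2*s by rfl] at hfin
  convert hfin using 1
  case e'_3 => rfl
  ring

end
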